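/- Let w, v, c be reals with c ≠ 0 satisfying (w+v)² > 4c², wv < c², and w > v. Set r = t = 1 and s = −2c/(w+v). Then the 2×2 symmetric matrices S = [[1, s],[s, 1]] and U = A·S·B are both positive definite, where A = [[w, c],[c, v]] and B = [[1, 0],[0, −1]]. -/

import Mathlib

/-- With `c ≠ 0`, `(w+v)² > 4c²`, `wv < c²` and `w > v`, setting
`s = −2c/(w+v)`, the matrices `S = [[1,s],[s,1]]` and `U = A·S·B` are both
positive definite, where `A = [[w,c],[c,v]]` and `B = diag(1,−1)`. -/
theorem liapunov_matrices_pos_def (w v c : ℝ) (hc : c ≠ 0)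
    (h1 : (w + v) ^ 2 > 4 * c ^ 2) (h2 : w * v < c ^ 2) (h3 : w > v) :
    Matrix.PosDef (!![1, -2*c/(w+v); -2*c/(w+v), 1] : Matrix (Fin 2) (Fin 2) ℝ) ∧
    Matrix.PosDef
      ((!![w, c; c, v] : Matrix (Fin 2) (Fin 2) ℝ)
        * !![1, -2*c/(w+v); -2*c/(w+v), 1]
        * !![1, 0; 0, -1]) := by
  have hc2 : 0 < c ^ 2 := by positivity
  have hd2 : 0 < (w + v) ^ 2 := by nlinarith
  have hd : w + v ≠ 0 := by
    intro h; rw [h] at hd2; simp at hd2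
  set s : ℝ := -2 * c / (w + v) with hs_def
  have hs : s * (w + v) = -2 * c := by
    rw [hs_def, div_mul_cancel₀ _ hd]
  have h4 : s ^ 2 * (w + v) ^ 2 = 4 * c ^ 2 := by
    rw [show s ^ 2 * (w + v) ^ 2 = (s * (w + v)) ^ 2 from by ring, hs]; ring
  have hs2 : s ^ 2 < 1 := by nlinarith [h4]
  clear hs_def
  clear_value s
  have hxx : ∀ x : Fin 2 → ℝ, x ≠ 0 → 0 < x 0 ^ 2 + x 1 ^ 2 := by
    intro x hx
    rcases Function.ne_iff.mp hx with ⟨i, hi⟩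
    simp only [Pi.zero_apply] at hi
    fin_cases i <;> simp only [Fin.isValue] at hi <;> positivity
  constructor
  · refine Matrix.PosDef.of_dotProduct_mulVec_pos ?_ (fun x hx => ?_)
    · apply Matrix.IsHermitian.ext
      intro i j
      fin_cases i <;> fin_cases j <;> simp
    · have hx2 := hxx x hx
      simp [dotProduct, Matrix.mulVec, Fin.sum_univ_two]
      nlinarith [sq_nonneg (x 0 + s * x 1), sq_nonneg (x 1 + s * x 0),
        mul_pos (sub_pos.2 hs2) hx2]
  · have htr : (w + c * s) + (-(c * s + v)) > 0 := by nlinarith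
    have hdetEq : (w + c * s) * (-(c * s + v)) - (c + v * s) ^ 2
        = (c ^ 2 - w * v) * (1 - s ^ 2) := by
      linear_combination (-(v * s + c)) * hs
    have hdet : (w + c * s) * (-(c * s + v)) - (c + v * s) ^ 2 > 0 := by
      rw [hdetEq]; exact mul_pos (by linarith) (by linarith)
    refine Matrix.PosDef.of_dotProduct_mulVec_pos ?_ (fun x hx => ?_)
    · apply Matrix.IsHermitian.ext
      intro i j
      fin_cases i <;> fin_cases j <;>
        simp [Matrix.mul_apply, Fin.sum_univ_two]
      all_goals first | linear_combination hs | linear_combination -hs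
    · have hx2 := hxx x hx
      have hkey : ((w * s + c) + (c + v * s)) * (x 0 * x 1) = 0 := by
        have : (w * s + c) + (c + v * s) = 0 := by linear_combination hs
        rw [this]; ring
      have key : 0 < (w + c * s) * x 0 ^ 2 + 2 * (c + v * s) * (x 0 * x 1)
          + (-(c * s + v)) * x 1 ^ 2 := by
        nlinarith [sq_nonneg ((w + c * s) * x 0 + (c + v * s) * x 1),
          sq_nonneg ((-(c * s + v)) * x 1 + (c + v * s) * x 0),
          mul_pos hdet hx2, htr]
      simp [dotProduct, Matrix.mulVec, Matrix.mul_apply,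
        Fin.sum_univ_two]
      nlinarith [key, hkey]
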